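/- Let G be a graph with transition matrix Q and SimRank matrix S solving S = C Q S Q^T + (1−C) I_n. Insert an edge (i,j) where both endpoints i (index n+1) and j (index n+2) are new nodes, giving new transition matrix Q̃ = diag(Q, N) with N = [[0,0],[1,0]]. Then the new SimRank matrix is S̃ = diag(S, Ŝ) where Ŝ = [[1−C, 0],[0, 1−C²]], i.e., this block-diagonal matrix solves S̃ = C Q̃ S̃ Q̃^T + (1−C) I_{n+2}. -/

import Mathlib

open Matrix

/-- inserting an edge `(i,j)` where both endpoints are new nodes gives
`Q̃ = diag(Q, N)` with `N = [[0,0],[1,0]]`, and the block-diagonal matrix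
`S̃ = diag(S, Ŝ)` with `Ŝ = [[1-C,0],[0,1-C²]]` solves the new SimRank equation. -/
theorem simrank_new_component {n : ℕ} (C : ℝ) (hC0 : 0 < C) (hC1 : C < 1)
    (Q S : Matrix (Fin n) (Fin n) ℝ)
    (hS : S = C • (Q * S * Qᵀ) + (1 - C) • (1 : Matrix (Fin n) (Fin n) ℝ))
    (N : Matrix (Fin 2) (Fin 2) ℝ) (hN : N = !![0, 0; 1, 0])
    (Sh : Matrix (Fin 2) (Fin 2) ℝ) (hSh : Sh = !![1 - C, 0; 0, 1 - C ^ 2])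
    (Qt St : Matrix (Fin n ⊕ Fin 2) (Fin n ⊕ Fin 2) ℝ)
    (hQt : Qt = fromBlocks Q 0 0 N)
    (hSt : St = fromBlocks S 0 0 Sh) :
    St = C • (Qt * St * Qtᵀ) + (1 - C) • (1 : Matrix (Fin n ⊕ Fin 2) (Fin n ⊕ Fin 2) ℝ) := by
  subst hQt hSt
  have hblock : Sh = C • (N * Sh * Nᵀ) + (1 - C) • 1 := by
    subst hN hSh
    ext i j
    fin_cases i <;> fin_cases j <;>
      simp [Matrix.mul_apply, Fin.sum_univ_two, Matrix.one_apply, Matrix.transpose_apply, Matrix.vecHead, Matrix.vecTail, Matrix.vecMul, dotProduct] <;> ring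
  rw [fromBlocks_transpose, fromBlocks_multiply, fromBlocks_multiply,
    ← fromBlocks_one, Matrix.fromBlocks_smul, Matrix.fromBlocks_smul,
    fromBlocks_add]
  congr 1 <;> simp [← hS, ← hblock]
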